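/- The case c = k > 1, l = 1 of the paper's stability analysis: for every integer k ≥ 2 and every real number α̃ ≥ 0, one has h(α̃,k,1) ≥ 0 if and only if α̃ ≤ (k³ + k)/4. In particular, since k ↦ (k³+k)/4 is increasing, the minimum over integers k ≥ 2 of the threshold is attained at k = 2 with value 5/2. -/

import Mathlib

/-- The coefficient of the second variation of the penalized Willmore functional
`W − 4π²α̃·Π¹` at the Clifford torus on an extremal Fourier mode of type `(k,l)`. -/
noncomputable def h (α : ℝ) (k l : ℕ) : ℝ :=
  2 * ((k:ℝ)^2 + (l:ℝ)^2)^2 - 6 * ((k:ℝ)^2 + (l:ℝ)^2) + 4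
    - 8 * α * k * l + 16 * α * k * l / ((k:ℝ)^2 + (l:ℝ)^2)

/-- The case `c = k > 1`, `l = 1` of the stability analysis: for every integer `k ≥ 2` and
`α̃ ≥ 0`, `h(α̃,k,1) ≥ 0` iff `α̃ ≤ (k³+k)/4`; the threshold `(k³+k)/4` is increasing in `k`
and its minimum over `k ≥ 2` is attained at `k = 2` with value `5/2`. -/
theorem off_diagonal_stability_iff :
    (∀ k : ℕ, 2 ≤ k → ∀ α : ℝ, 0 ≤ α →
      (0 ≤ h α k 1 ↔ α ≤ ((k:ℝ)^3 + k) / 4))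
    ∧ (∀ k k' : ℕ, 2 ≤ k → k ≤ k' → ((k:ℝ)^3 + k) / 4 ≤ ((k':ℝ)^3 + k') / 4)
    ∧ (∀ k : ℕ, 2 ≤ k → ((2:ℝ)^3 + 2) / 4 ≤ ((k:ℝ)^3 + k) / 4)
    ∧ ((2:ℝ)^3 + 2) / 4 = 5/2 := by
  refine ⟨?_, ?_, ?_, by norm_num⟩
  · intro k hk α hα
    have hx : (2:ℝ) ≤ (k:ℝ) := by exact_mod_cast hk
    set x : ℝ := (k:ℝ) with hxdef
    have hx0 : (0:ℝ) < x^2 + 1 := by positivity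
    have hc : (0:ℝ) < 8 * x * (x^2 - 1) / (x^2 + 1) := by
      have h1 : (0:ℝ) < x := by linarith
      have h2 : (0:ℝ) < x^2 - 1 := by nlinarith
      positivity
    have hform : h α k 1 = 8 * x * (x^2 - 1) / (x^2 + 1) * ((x^3 + x) / 4 - α) := by
      simp only [h, Nat.cast_one, ← hxdef]
      field_simp
      ring
    rw [hform]
    constructor
    · intro hpos
      nlinarith [mul_pos hc hc, (mul_le_mul_iff_right₀ hc).mpr hpos]
    · intro hle
      have : (0:ℝ) ≤ (x^3 + x) / 4 - α := by linarith
      positivity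
  · intro k k' hk hkk'
    have hx : (k:ℝ) ≤ (k':ℝ) := by exact_mod_cast hkk'
    have h0 : (0:ℝ) ≤ (k:ℝ) := by positivity
    nlinarith [mul_nonneg (sub_nonneg.mpr hx) (by positivity : (0:ℝ) ≤ (k':ℝ)^2 + (k':ℝ)*(k:ℝ) + (k:ℝ)^2)]
  · intro k hk
    have hx : (2:ℝ) ≤ (k:ℝ) := by exact_mod_cast hk
    nlinarith [mul_nonneg (by linarith : (0:ℝ) ≤ (k:ℝ) - 2) (by positivity : (0:ℝ) ≤ (k:ℝ)^2 + 2*(k:ℝ) + 4)]
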